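/- Let K be a field of characteristic 0, q ∈ K nonzero, and let K_q(x̄,ȳ) be the skew field of fractions of the tensor product of n quantum planes K_q[x_i,y_i] (relations y_i x_j = q^{δ_{ij}} x_j y_i, [x_i,x_j] = [y_i,y_j] = 0), with S_n acting by simultaneously permuting the x_i and y_i. Define t_i ∈ K_q(x̄,ȳ) as the unique solutions of t_1 + x_i t_2 + ... + x_i^{n-1} t_n = y_i for i = 1,...,n. Then [t_i, t_j] = 0 for all i, j. -/

import Mathlib

open Polynomial Finset

/-! ### Auxiliary: commutative subfield generated via double centralizer -/

section CC
variable {D : Type*} [DivisionRing D]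

/-- The double centralizer of a set, as a subfield. -/
def commClosure (S : Set D) : Subfield D where
  __ := Subring.centralizer (Set.centralizer S)
  inv_mem' := by
    intro a ha
    have ha' : a ∈ Subring.centralizer (Set.centralizer S) := ha
    rw [Subring.mem_centralizer_iff] at ha'
    show a⁻¹ ∈ Subring.centralizer (Set.centralizer S)
    rw [Subring.mem_centralizer_iff]
    intro g hg
    exact (Commute.inv_right₀ (ha' g hg : Commute g a)).eq

theorem mem_commClosure {S : Set D} {a : D} :
    a ∈ commClosure S ↔ ∀ g ∈ Set.centralizer S, g * a = a * g :=
  Subring.mem_centralizer_iff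

theorem self_mem_commClosure {S : Set D} {a : D} (ha : a ∈ S) : a ∈ commClosure S :=
  mem_commClosure.mpr fun _ hg => (hg a ha).symm

theorem central_mem_commClosure {S : Set D} {a : D} (ha : ∀ d, a * d = d * a) :
    a ∈ commClosure S := mem_commClosure.mpr fun g _ => (ha g).symm

theorem commClosure_comm {S : Set D} (hS : ∀ a ∈ S, ∀ b ∈ S, a * b = b * a)
    {a b : D} (haa : a ∈ commClosure S) (hbb : b ∈ commClosure S) : a * b = b * a := by
  have hb : b ∈ Set.centralizer S := by
    intro s hs
    exact mem_commClosure.mp hbb s (fun u hu => hS _ hu _ hs)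
  exact (mem_commClosure.mp haa b hb).symm

noncomputable def commClosureField {S : Set D} (hS : ∀ a ∈ S, ∀ b ∈ S, a * b = b * a) :
    Field (commClosure S) :=
  { (inferInstance : DivisionRing (commClosure S)) with
    mul_comm := fun a b => Subtype.ext (commClosure_comm hS a.2 b.2) }
end CC

/-! ### Auxiliary: the Lagrange coefficients and their identities -/

/-- The entries of the inverse Vandermonde matrix (Lagrange basis coefficients). -/
noncomputable def lagC {F : Type*} [Field F] {n : ℕ} (χ : Fin n → F) (j k : Fin n) : F :=
  (∏ m ∈ univ.erase k, (X - C (χ m))).coeff j * (∏ m ∈ univ.erase k, (χ k - χ m))⁻¹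

theorem lagC_eq_basis_coeff {F : Type*} [Field F] {n : ℕ} (χ : Fin n → F) (j k : Fin n) :
    lagC χ j k = (Lagrange.basis univ χ k).coeff j := by
  rw [Lagrange.basis_eq_prod_sub_inv_mul_nodal_div (mem_univ k),
    ← Lagrange.nodal_erase_eq_nodal_div (mem_univ k), coeff_C_mul, Lagrange.nodalWeight,
    Lagrange.nodal, lagC, ← prod_inv_distrib, mul_comm]

/-- The inverse Vandermonde property `C * V = 1`. -/
theorem lag2 {F : Type*} [Field F] {n : ℕ} (χ : Fin n → F) (hχ : Function.Injective χ)
    (j l : Fin n) : ∑ k, lagC χ j k * χ k ^ (l : ℕ) = if j = l then 1 else 0 := by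
  have hvs : Set.InjOn χ ↑(univ : Finset (Fin n)) := hχ.injOn
  have hdeg : (X ^ (l : ℕ) : F[X]).degree < (univ : Finset (Fin n)).card := by
    rw [degree_X_pow, card_univ, Fintype.card_fin]
    exact_mod_cast l.isLt
  have h := Lagrange.eq_interpolate (f := X ^ (l : ℕ)) hvs hdeg
  have h2 := congrArg (fun p => Polynomial.coeff p j) h
  simp only [Lagrange.interpolate_apply, coeff_X_pow, finset_sum_coeff, coeff_C_mul,
    eval_pow, eval_X] at h2
  have h3 : ∀ k, lagC χ j k * χ k ^ (l : ℕ) = χ k ^ (l : ℕ) * (Lagrange.basis univ χ k).coeff j :=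
    fun k => by rw [lagC_eq_basis_coeff, mul_comm]
  simp only [h3]
  rw [← h2]
  congr 1
  simp [Fin.val_eq_val, eq_comm]

theorem star_identity {F : Type*} [Field F] (A B A' B' pa qa pb qb Ei Ek : F)
    (hAB : A - B ≠ 0) (h1 : B - A' ≠ 0) (h2 : A - B' ≠ 0) (hEi : Ei ≠ 0) (hEk : Ek ≠ 0) :
    (pa - B*qa) * ((A-B)*Ei)⁻¹ * ((pb - A'*qb) * ((B-A')*Ek)⁻¹)
      + (pa - A*qa) * ((B-A)*Ek)⁻¹ * ((pb - B'*qb) * ((A-B')*Ei)⁻¹)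
    = (pb - B*qb) * ((A-B)*Ei)⁻¹ * ((pa - A'*qa) * ((B-A')*Ek)⁻¹)
      + (pb - A*qb) * ((B-A)*Ek)⁻¹ * ((pa - B'*qa) * ((A-B')*Ei)⁻¹) := by
  have hBA : B - A ≠ 0 := fun h => hAB (by linear_combination -h)
  field_simp
  ring

theorem coeff_X_sub_C_mul' {R : Type*} [CommRing R] (w : R) (P : R[X]) (j : ℕ) :
    ((X - C w) * P).coeff j = (X * P).coeff j - w * P.coeff j := by
  rw [sub_mul, coeff_sub, coeff_C_mul]

/-- The key symmetric-rational-function identity for the off-diagonal terms. -/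
theorem starC {F : Type*} [Field F] {n : ℕ} (χ : Fin n → F) (hχ : Function.Injective χ)
    (qF : F) (i k : Fin n) (hik : i ≠ k)
    (h1 : χ k ≠ qF * χ i) (h2 : χ i ≠ qF * χ k) (a b : Fin n) :
    lagC χ a i * lagC (fun m => if m = i then qF * χ m else χ m) b k
      + lagC χ a k * lagC (fun m => if m = k then qF * χ m else χ m) b i
    = lagC χ b i * lagC (fun m => if m = i then qF * χ m else χ m) a k
      + lagC χ b k * lagC (fun m => if m = k then qF * χ m else χ m) a i := by
  classical
  set s0 : Finset (Fin n) := (univ.erase k).erase i with hs0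
  have hs0' : (univ.erase i).erase k = s0 := Finset.erase_right_comm
  have hk_mem : k ∈ univ.erase i := mem_erase.mpr ⟨(Ne.symm hik), mem_univ k⟩
  have hi_mem : i ∈ univ.erase k := mem_erase.mpr ⟨hik, mem_univ i⟩
  have hne_i : ∀ m ∈ s0, m ≠ i := fun m hm => (mem_erase.mp hm).1
  have hne_k : ∀ m ∈ s0, m ≠ k := fun m hm => (mem_erase.mp ((mem_erase.mp hm).2)).1
  set P : F[X] := ∏ m ∈ s0, (X - C (χ m)) with hPdef
  set Ei : F := ∏ m ∈ s0, (χ i - χ m) with hEidef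
  set Ek : F := ∏ m ∈ s0, (χ k - χ m) with hEkdef
  have Ni : ∏ m ∈ univ.erase i, (X - C (χ m)) = (X - C (χ k)) * P := by
    rw [← mul_prod_erase _ _ hk_mem, hs0']
  have Nk : ∏ m ∈ univ.erase k, (X - C (χ m)) = (X - C (χ i)) * P := by
    rw [← mul_prod_erase _ _ hi_mem]
  have Nik : ∏ m ∈ univ.erase k, (X - C (if m = i then qF * χ m else χ m))
      = (X - C (qF * χ i)) * P := by
    rw [← mul_prod_erase _ _ hi_mem, if_pos rfl]
    congr 1
    exact prod_congr rfl fun m hm => by rw [if_neg (hne_i m hm)]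
  have Nki : ∏ m ∈ univ.erase i, (X - C (if m = k then qF * χ m else χ m))
      = (X - C (qF * χ k)) * P := by
    rw [← mul_prod_erase _ _ hk_mem, if_pos rfl, hs0']
    congr 1
    exact prod_congr rfl fun m hm => by rw [if_neg (hne_k m hm)]
  have di : ∏ m ∈ univ.erase i, (χ i - χ m) = (χ i - χ k) * Ei := by
    rw [← mul_prod_erase _ _ hk_mem, hs0']
  have dk : ∏ m ∈ univ.erase k, (χ k - χ m) = (χ k - χ i) * Ek := by
    rw [← mul_prod_erase _ _ hi_mem]
  have dik : ∏ m ∈ univ.erase k,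
      ((if (k : Fin n) = i then qF * χ k else χ k) - (if m = i then qF * χ m else χ m))
      = (χ k - qF * χ i) * Ek := by
    rw [if_neg (Ne.symm hik), ← mul_prod_erase _ _ hi_mem, if_pos rfl]
    congr 1
    exact prod_congr rfl fun m hm => by rw [if_neg (hne_i m hm)]
  have dki : ∏ m ∈ univ.erase i,
      ((if (i : Fin n) = k then qF * χ i else χ i) - (if m = k then qF * χ m else χ m))
      = (χ i - qF * χ k) * Ei := by
    rw [if_neg hik, ← mul_prod_erase _ _ hk_mem, if_pos rfl, hs0']
    congr 1
    exact prod_congr rfl fun m hm => by rw [if_neg (hne_k m hm)]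
  have hEi : Ei ≠ 0 := prod_ne_zero_iff.mpr fun m hm =>
    sub_ne_zero.mpr fun h => (hne_i m hm).symm (hχ h)
  have hEk : Ek ≠ 0 := prod_ne_zero_iff.mpr fun m hm =>
    sub_ne_zero.mpr fun h => (hne_k m hm).symm (hχ h)
  have hAB : χ i - χ k ≠ 0 := sub_ne_zero.mpr fun h => hik (hχ h)
  have hBA' : χ k - qF * χ i ≠ 0 := sub_ne_zero.mpr h1
  have hAB' : χ i - qF * χ k ≠ 0 := sub_ne_zero.mpr h2
  simp only [lagC, Ni, Nk, Nik, Nki, di, dk, dik, dki, coeff_X_sub_C_mul']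
  exact star_identity (χ i) (χ k) (qF * χ i) (qF * χ k) ((X*P).coeff a) (P.coeff a)
    ((X*P).coeff b) (P.coeff b) Ei Ek hAB hBA' hAB' hEi hEk

/-- The diagonal case. -/
theorem diagC {F : Type*} [Field F] {n : ℕ} (χ : Fin n → F) (qF : F) (i a b : Fin n) :
    lagC χ a i * lagC (fun m => if m = i then qF * χ m else χ m) b i
    = lagC χ b i * lagC (fun m => if m = i then qF * χ m else χ m) a i := by
  simp only [lagC]
  have hN : ∏ m ∈ univ.erase i, (X - C (if m = i then qF * χ m else χ m))
      = ∏ m ∈ univ.erase i, (X - C (χ m)) :=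
    prod_congr rfl fun m hm => by rw [if_neg (mem_erase.mp hm).1]
  rw [hN]; ring

/-! ### Auxiliary: conjugation lemmas -/

section Conj
variable {D : Type*} [DivisionRing D] {F : Type*} [Field F] {ι' : F →+* D} {Y : D}

theorem conj_mul' {a b a' b' : F} (ha : Y * ι' a = ι' a' * Y) (hb : Y * ι' b = ι' b' * Y) :
    Y * ι' (a * b) = ι' (a' * b') * Y := by
  rw [map_mul, map_mul, ← mul_assoc, ha, mul_assoc, hb, mul_assoc]

theorem conj_sub' {a b a' b' : F} (ha : Y * ι' a = ι' a' * Y) (hb : Y * ι' b = ι' b' * Y) :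
    Y * ι' (a - b) = ι' (a' - b') * Y := by
  rw [map_sub, map_sub, mul_sub, sub_mul, ha, hb]

theorem conj_neg' {a a' : F} (ha : Y * ι' a = ι' a' * Y) :
    Y * ι' (-a) = ι' (-a') * Y := by
  rw [map_neg, map_neg, mul_neg, neg_mul, ha]

theorem conj_one' : Y * ι' 1 = ι' 1 * Y := by rw [map_one, mul_one, one_mul]

theorem conj_zero' : Y * ι' 0 = ι' 0 * Y := by rw [map_zero, mul_zero, zero_mul]

theorem conj_inv_D (hY : Y ≠ 0) {A A' : D} (h : Y * A = A' * Y) :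
    Y * A⁻¹ = A'⁻¹ * Y := by
  by_cases hA : A = 0
  · have hA' : A' = 0 := by
      have h0 : A' * Y = 0 := by rw [← h, hA, mul_zero]
      rcases mul_eq_zero.mp h0 with h' | h'
      · exact h'
      · exact absurd h' hY
    rw [hA, hA', inv_zero, mul_zero, zero_mul]
  · have hA' : A' ≠ 0 := by
      intro h0
      rw [h0, zero_mul] at h
      rcases mul_eq_zero.mp h with h' | h'
      · exact absurd h' hY
      · exact absurd h' hA
    apply mul_left_cancel₀ hA'
    rw [← mul_assoc, ← h, mul_assoc, mul_inv_cancel₀ hA, mul_one, ← mul_assoc,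
      mul_inv_cancel₀ hA', one_mul]

theorem conj_inv' (hY : Y ≠ 0) {a a' : F} (h : Y * ι' a = ι' a' * Y) :
    Y * ι' a⁻¹ = ι' a'⁻¹ * Y := by
  rw [map_inv₀, map_inv₀]
  exact conj_inv_D hY h

theorem conj_prod' {κ : Type*} [DecidableEq κ] {s : Finset κ} {f f' : κ → F}
    (h : ∀ m ∈ s, Y * ι' (f m) = ι' (f' m) * Y) :
    Y * ι' (∏ m ∈ s, f m) = ι' (∏ m ∈ s, f' m) * Y := by
  induction s using Finset.induction_on with
  | empty => simp only [prod_empty]; exact conj_one'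
  | @insert a s hns ih =>
    rw [prod_insert hns, prod_insert hns]
    exact conj_mul' (h _ (mem_insert_self _ _)) (ih fun m hm => h m (mem_insert_of_mem hm))

theorem conj_coeff' {κ : Type*} [DecidableEq κ] {s : Finset κ} {f f' : κ → F}
    (h : ∀ m ∈ s, Y * ι' (f m) = ι' (f' m) * Y) (j : ℕ) :
    Y * ι' ((∏ m ∈ s, (X - C (f m))).coeff j)
      = ι' ((∏ m ∈ s, (X - C (f' m))).coeff j) * Y := by
  induction s using Finset.induction_on generalizing j with
  | empty =>
    simp only [prod_empty, coeff_one]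
    split
    · exact conj_one'
    · exact conj_zero'
  | @insert a s hns ih =>
    have ha := h _ (mem_insert_self a s)
    have hs : ∀ m ∈ s, Y * ι' (f m) = ι' (f' m) * Y := fun m hm => h m (mem_insert_of_mem hm)
    rw [prod_insert hns, prod_insert hns, coeff_X_sub_C_mul', coeff_X_sub_C_mul']
    match j with
    | 0 =>
      have hX : ∀ (P : F[X]), (X * P).coeff 0 = 0 := by
        intro P; rw [mul_coeff_zero, coeff_X_zero, zero_mul]
      rw [hX, hX, zero_sub, zero_sub]
      exact conj_neg' (conj_mul' ha (ih hs 0))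
    | (j + 1) =>
      rw [coeff_X_mul, coeff_X_mul]
      exact conj_sub' (ih hs j) (conj_mul' ha (ih hs (j + 1)))
end Conj

/-! ### The key abstract lemma -/

theorem key_commute {D : Type*} [DivisionRing D] {F : Type*} [DivisionRing F]
    (hcomm : ∀ a b : F, a * b = b * a) (ι : F →+* D)
    {n : ℕ} (χ : Fin n → F) (hχ : Function.Injective χ) (qF : F) (hqF0 : qF ≠ 0)
    (hqcen : ∀ d : D, ι qF * d = d * ι qF)
    (y t : Fin n → D)
    (hyy : ∀ i j, y i * y j = y j * y i)
    (hyx : ∀ i j, y i * ι (χ j) = ι (if i = j then qF * χ j else χ j) * y i)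
    (htwo : (2 : D) ≠ 0)
    (ht : ∀ i, ∑ j : Fin n, ι (χ i) ^ (j : ℕ) * t j = y i) :
    ∀ a b, t a * t b = t b * t a := by
  classical
  letI instField : Field F := { (inferInstance : DivisionRing F) with mul_comm := hcomm }
  have hι : Function.Injective ι := ι.injective
  set χupd : Fin n → Fin n → F := fun i m => if m = i then qF * χ m else χ m with hχupd
  have hgen : ∀ i m, y i * ι (χ m) = ι (χupd i m) * y i := by
    intro i m
    rw [hyx i m]
    by_cases h : i = m
    · subst h; simp [hχupd]
    · rw [if_neg h, hχupd]
      simp [Ne.symm h]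
  have hq1 : ∀ i k, i ≠ k → y i ≠ 0 → χ k ≠ qF * χ i := by
    intro i k hik hyi e
    have e1 : y i * ι (χ k) = ι (χ k) * y i := by rw [hyx, if_neg hik]
    have e2 : y i * ι (χ k) = ι (qF * (qF * χ i)) * y i := by
      rw [e, map_mul, ← mul_assoc, ← hqcen (y i), mul_assoc, hyx i i, if_pos rfl,
        ← mul_assoc, ← map_mul]
    have e3 : χ k = qF * (qF * χ i) := hι (mul_right_cancel₀ hyi (e1.symm.trans e2))
    rw [← e] at e3
    by_cases hk0 : χ k = 0
    · have hxi : χ i = 0 := by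
        have := e.symm.trans hk0
        rcases mul_eq_zero.mp this with h' | h'
        · exact absurd h' hqF0
        · exact h'
      exact hik (hχ (hxi.trans hk0.symm))
    · have hq1' : qF = 1 := by
        have : (qF - 1) * χ k = 0 := by linear_combination -e3
        rcases mul_eq_zero.mp this with h' | h'
        · linear_combination h'
        · exact absurd h' hk0
      rw [hq1', one_mul] at e
      exact hik (hχ e).symm
  have hconj : ∀ i, y i ≠ 0 → ∀ j k, y i * ι (lagC χ j k) = ι (lagC (χupd i) j k) * y i := by
    intro i hyi j k
    have hfac : ∀ m ∈ univ.erase k, y i * ι (χ m) = ι (χupd i m) * y i := fun m _ => hgen i m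
    have hden : ∀ m ∈ univ.erase k,
        y i * ι (χ k - χ m) = ι (χupd i k - χupd i m) * y i :=
      fun m _ => conj_sub' (hgen i k) (hgen i m)
    exact conj_mul' (conj_coeff' hfac j) (conj_inv' hyi (conj_prod' hden))
  -- expansion of t
  have hT : ∀ j, t j = ∑ k, ι (lagC χ j k) * y k := by
    intro j
    have step : ∑ k, ι (lagC χ j k) * y k
        = ∑ k, ∑ l : Fin n, ι (lagC χ j k * χ k ^ (l : ℕ)) * t l := by
      refine sum_congr rfl fun k _ => ?_
      rw [← ht k, mul_sum]
      refine sum_congr rfl fun l _ => ?_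
      rw [map_mul, map_pow, mul_assoc]
    have step2 : ∀ l : Fin n, ∑ k, ι (lagC χ j k * χ k ^ (l : ℕ)) * t l
        = ι (if j = l then 1 else 0) * t l := by
      intro l
      rw [← sum_mul, ← map_sum, lag2 χ hχ j l]
    have final : ∑ k, ι (lagC χ j k) * y k = t j := by
      rw [step, sum_comm]
      simp only [step2, apply_ite ι, map_one, map_zero, ite_mul, one_mul, zero_mul]
      simp
    exact final.symm
  set g : Fin n → Fin n → Fin n → Fin n → D :=
    fun a b i k => ι (lagC χ a i * lagC (χupd i) b k) * (y i * y k) with hg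
  have hexp : ∀ a b, t a * t b = ∑ i, ∑ k, g a b i k := by
    intro a b
    rw [hT a, sum_mul]
    refine sum_congr rfl fun i _ => ?_
    by_cases hyi : y i = 0
    · simp [hg, hyi]
    · rw [mul_assoc, hT b, mul_sum, mul_sum]
      refine sum_congr rfl fun k _ => ?_
      rw [← mul_assoc (y i), hconj i hyi b k, hg]
      simp only [map_mul, mul_assoc]
  have hsym : ∀ a b i k, g a b i k + g a b k i = g b a i k + g b a k i := by
    intro a b i k
    by_cases hik : i = k
    · subst hik
      have := diagC χ qF i a b
      simp only [hg]
      rw [show lagC χ a i * lagC (χupd i) b i = lagC χ b i * lagC (χupd i) a i from this]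
    · by_cases hyi : y i = 0
      · simp [hg, hyi]
      · by_cases hyk : y k = 0
        · simp [hg, hyk]
        · have h1 := hq1 i k hik hyi
          have h2 := hq1 k i (Ne.symm hik) hyk
          have hstar := starC χ hχ qF i k hik h1 h2 a b
          have hyik : y k * y i = y i * y k := hyy k i
          simp only [hg, hyik]
          rw [← add_mul, ← add_mul, ← map_add, ← map_add, hstar]
  intro a b
  have key2 : t a * t b + t a * t b = t b * t a + t b * t a := by
    rw [hexp a b, hexp b a]
    have hc1 : (∑ i, ∑ k, g a b i k) = ∑ i, ∑ k, g a b k i := Finset.sum_comm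
    have hc2 : (∑ i, ∑ k, g b a i k) = ∑ i, ∑ k, g b a k i := Finset.sum_comm
    calc (∑ i, ∑ k, g a b i k) + (∑ i, ∑ k, g a b i k)
        = ∑ i, ∑ k, (g a b i k + g a b k i) := by
          nth_rewrite 2 [hc1]
          rw [← sum_add_distrib]
          exact sum_congr rfl fun i _ => by rw [← sum_add_distrib]
      _ = ∑ i, ∑ k, (g b a i k + g b a k i) :=
          sum_congr rfl fun i _ => sum_congr rfl fun k _ => hsym a b i k
      _ = (∑ i, ∑ k, g b a i k) + (∑ i, ∑ k, g b a i k) := by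
          nth_rewrite 2 [hc2]
          rw [← sum_add_distrib]
          exact (sum_congr rfl fun i _ => by rw [← sum_add_distrib]).symm
  have key3 : (2 : D) * (t a * t b) = 2 * (t b * t a) := by
    rw [two_mul, two_mul]; exact key2
  exact mul_left_cancel₀ htwo key3

/-- Proposition (prp:tcommutes): in the skew field of fractions of the tensor product of
`n` quantum planes (relations `y_i x_j = q^{δ_{ij}} x_j y_i, all `x`'s commuting and all
`y`'s commuting), the unique solutions `t_1,…,t_n` of the Vandermonde system
`t_1 + x_i t_2 + ⋯ + x_i^{n-1} t_n = y_i` pairwise commute. -/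
theorem t_elements_commute (K : Type*) [Field K] [CharZero K] (q : K) (hq : q ≠ 0)
    (D : Type*) [DivisionRing D] [Algebra K D] (n : ℕ) (x y : Fin n → D)
    (hxx : ∀ i j, x i * x j = x j * x i)
    (hyy : ∀ i j, y i * y j = y j * y i)
    (hyx : ∀ i j, y i * x j = (if i = j then q else 1) • (x j * y i))
    (hx : Function.Injective x)
    (t : Fin n → D) (ht : ∀ i, ∑ j : Fin n, x i ^ (j : ℕ) * t j = y i) :
    ∀ i j, t i * t j = t j * t i := by
  classical
  have hS : ∀ u ∈ Set.range x, ∀ v ∈ Set.range x, u * v = v * u := by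
    rintro _ ⟨i, rfl⟩ _ ⟨j, rfl⟩; exact hxx i j
  set F := commClosure (Set.range x) with hF
  let ι : F →+* D := F.subtype
  let χ : Fin n → F := fun m => ⟨x m, self_mem_commClosure ⟨m, rfl⟩⟩
  have hqD_mem : (algebraMap K D q) ∈ F :=
    central_mem_commClosure fun d => (Algebra.commutes q d)
  let qF : F := ⟨algebraMap K D q, hqD_mem⟩
  have hqD0 : (algebraMap K D q) ≠ 0 := fun h =>
    hq ((algebraMap K D).injective (h.trans (map_zero _).symm))
  haveI : CharZero D := charZero_of_injective_algebraMap (algebraMap K D).injective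
  have hcomm : ∀ a b : F, a * b = b * a :=
    fun a b => Subtype.ext (commClosure_comm hS a.2 b.2)
  refine key_commute hcomm ι χ ?_ qF ?_ ?_ y t hyy ?_ ?_ ?_
  · exact fun a b h => hx (congrArg Subtype.val h)
  · intro h
    exact hqD0 (congrArg Subtype.val h)
  · intro d
    show (algebraMap K D q) * d = d * (algebraMap K D q)
    exact Algebra.commutes q d
  · intro i j
    have hxj : ι (χ j) = x j := rfl
    rw [hxj, hyx i j]
    by_cases h : i = j
    · rw [if_pos h, if_pos h, map_mul, Algebra.smul_def, ← mul_assoc]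
      rfl
    · rw [if_neg h, if_neg h, one_smul]
      rfl
  · exact two_ne_zero
  · intro i
    exact ht i
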